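/- With λ + γ = 1 and S(x, t) = P^t − Qˣ P^{t−x}, for all n ≥ 1 it holds that π S(x,t)ⁿ = h(x)ⁿ π where h(x) = 1 − (1 − p_e)ˣ. -/

import Mathlib

open Matrix

theorem pi_S_pow_eq
    (l g pG pB : ℝ) (hl0 : 0 ≤ l) (hl1 : l ≤ 1) (hg0 : 0 ≤ g) (hg1 : g ≤ 1)
    (hpG0 : 0 ≤ pG) (hpG1 : pG ≤ 1) (hpB0 : 0 ≤ pB) (hpB1 : pB ≤ 1)
    (hsum : l + g = 1) (x t : ℕ) (hx : 1 ≤ x) (hxt : x ≤ t) :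
    ∀ n : ℕ, 1 ≤ n →
      Matrix.vecMul ![g, l]
          (((!![1 - l, l; g, 1 - g] : Matrix (Fin 2) (Fin 2) ℝ) ^ t -
             !![(1 - pG) * (1 - l), (1 - pG) * l;
                (1 - pB) * g, (1 - pB) * (1 - g)] ^ x *
               !![1 - l, l; g, 1 - g] ^ (t - x)) ^ n)
        = (1 - (1 - (g * pG + l * pB)) ^ x) ^ n • ![g, l] := by
  set P : Matrix (Fin 2) (Fin 2) ℝ := !![1 - l, l; g, 1 - g] with hPdef
  set Q : Matrix (Fin 2) (Fin 2) ℝ := !![(1 - pG) * (1 - l), (1 - pG) * l;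
                (1 - pB) * g, (1 - pB) * (1 - g)] with hQdef
  set π : Fin 2 → ℝ := ![g, l] with hπ
  have hg : g = 1 - l := by linarith
  have hP : vecMul π P = π := by
    funext i; fin_cases i <;>
      simp [hPdef, hπ, vecMul, dotProduct, Fin.sum_univ_two] <;> ring
  have hQ : vecMul π Q = (1 - (g * pG + l * pB)) • π := by
    funext i; fin_cases i <;>
      simp [hQdef, hπ, hg, vecMul, dotProduct, Fin.sum_univ_two] <;> ring
  have hPk : ∀ k : ℕ, vecMul π (P ^ k) = π := by
    intro k; induction k with
    | zero => simp
    | succ k ih => rw [pow_succ, ← vecMul_vecMul, ih, hP]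
  have hQk : ∀ k : ℕ, vecMul π (Q ^ k) = (1 - (g * pG + l * pB)) ^ k • π := by
    intro k; induction k with
    | zero => simp
    | succ k ih =>
        rw [pow_succ, ← vecMul_vecMul, ih, smul_vecMul, hQ, smul_smul, pow_succ]
  have hS : vecMul π (P ^ t - Q ^ x * P ^ (t - x))
      = (1 - (1 - (g * pG + l * pB)) ^ x) • π := by
    rw [vecMul_sub, hPk, ← vecMul_vecMul, hQk, smul_vecMul, hPk, sub_smul, one_smul]
  intro n hn
  induction n with
  | zero => omega
  | succ n ih =>
      rcases Nat.eq_or_lt_of_le hn with h1 | h1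
      · rw [← h1]; simpa using hS
      · have := ih (by omega)
        rw [pow_succ, ← vecMul_vecMul, this, smul_vecMul, hS, smul_smul, pow_succ]
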